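/- Let (G, Γ) be a Hecke pair and g ∈ G. Define a relation on subsets of G by: D ⇝ E if and only if there exist x ∈ G and γ ∈ Γ with D = ΓxΓ and E = Γ(x⁻¹γx)Γ. Suppose that for every sequence (γₖ)_{k ≥ 1} of elements of Γ, the set of double cosets {Γ[g, γ₁, …, γₙ]Γ : n ≥ 1} is finite. Then the set {E ⊆ G : E is reachable from ΓgΓ by the reflexive-transitive closure of ⇝} is finite. -/

import Mathlib

open Pointwise

/-- The commutator `[s,t] = s⁻¹t⁻¹st`. -/
def pcomm {G : Type*} [Group G] (s t : G) : G := s⁻¹ * t⁻¹ * s * t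

/-- The iterated commutator `[g, γ₁, …, γₙ]`. -/
def itComm {G : Type*} [Group G] (g : G) (γ : ℕ → G) : ℕ → G
  | 0 => g
  | n + 1 => pcomm (itComm g γ n) (γ (n + 1))

namespace Stmt11Aux

variable {G : Type*} [Group G] (Γ : Subgroup G)

def dc (x : G) : Set G := (Γ : Set G) * {x} * (Γ : Set G)

lemma mem_dc {x y : G} : y ∈ dc Γ x ↔ ∃ u ∈ Γ, ∃ v ∈ Γ, y = u * x * v := by
  simp only [dc, Set.mem_mul, Set.mem_singleton_iff, SetLike.mem_coe]
  constructor
  · rintro ⟨w, ⟨u, hu, z, rfl, rfl⟩, v, hv, rfl⟩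
    exact ⟨u, hu, v, hv, rfl⟩
  · rintro ⟨u, hu, v, hv, rfl⟩
    exact ⟨u * x, ⟨u, hu, x, rfl, rfl⟩, v, hv, rfl⟩

lemma dc_eq_dc {x p q : G} (hp : p ∈ Γ) (hq : q ∈ Γ) : dc Γ (p * x * q) = dc Γ x := by
  ext y
  rw [mem_dc, mem_dc]
  constructor
  · rintro ⟨u, hu, v, hv, rfl⟩
    exact ⟨u * p, mul_mem hu hp, q * v, mul_mem hq hv, by group⟩
  · rintro ⟨u, hu, v, hv, rfl⟩
    exact ⟨u * p⁻¹, mul_mem hu (inv_mem hp), q⁻¹ * v, mul_mem (inv_mem hq) hv, by group⟩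

lemma dc_mul_right {x q : G} (hq : q ∈ Γ) : dc Γ (x * q) = dc Γ x := by
  have := dc_eq_dc Γ (x := x) (one_mem Γ) hq
  rwa [one_mul] at this

/-- The successor relation. -/
def rel : Set G → Set G → Prop :=
  fun D E => ∃ x : G, ∃ γ ∈ Γ, D = dc Γ x ∧ E = dc Γ (x⁻¹ * γ * x)

lemma step_char {a : G} {E : Set G} (h : rel Γ (dc Γ a) E) :
    ∃ δ ∈ Γ, E = dc Γ (a⁻¹ * δ * a) := by
  obtain ⟨x, γ, hγ, hax, hE⟩ := h
  have ha : a ∈ dc Γ x := by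
    rw [← hax, mem_dc]
    exact ⟨1, one_mem _, 1, one_mem _, by group⟩
  obtain ⟨p, hp, q, hq, hxa⟩ := (mem_dc Γ).1 ha
  refine ⟨p * γ * p⁻¹, mul_mem (mul_mem hp hγ) (inv_mem hp), ?_⟩
  have key : a⁻¹ * (p * γ * p⁻¹) * a = q⁻¹ * (x⁻¹ * γ * x) * q := by
    subst hxa; group
  rw [hE, key, dc_eq_dc Γ (inv_mem hq) hq]

lemma dc_eq_preimage (x : G) :
    dc Γ x = (Γ : Set G) * (QuotientGroup.mk ⁻¹' {(QuotientGroup.mk x : G ⧸ Γ)}) := by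
  have h1 : (QuotientGroup.mk ⁻¹' {(QuotientGroup.mk x : G ⧸ Γ)} : Set G)
      = {x} * (Γ : Set G) := by
    ext z
    simp only [Set.mem_preimage, Set.mem_singleton_iff, Set.singleton_mul, Set.mem_image,
      SetLike.mem_coe]
    constructor
    · intro h
      exact ⟨x⁻¹ * z, (QuotientGroup.eq).1 h.symm, by group⟩
    · rintro ⟨v, hv, rfl⟩
      exact (QuotientGroup.eq).2 (by simpa using hv) |>.symm
  rw [h1, dc, mul_assoc]

lemma branch_finite (a : G)
    (hH : ((QuotientGroup.mk '' ((Γ : Set G) * {a} * (Γ : Set G))) : Set (G ⧸ Γ)).Finite) :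
    {E : Set G | rel Γ (dc Γ a) E}.Finite := by
  have hT : ((fun c : G ⧸ Γ => (Γ : Set G) * (QuotientGroup.mk ⁻¹' {c})) ''
      ((fun c : G ⧸ Γ => a⁻¹ • c) ''
        (QuotientGroup.mk '' ((Γ : Set G) * {a} * (Γ : Set G))))).Finite :=
    (hH.image _).image _
  refine hT.subset ?_
  rintro E hE
  obtain ⟨δ, hδ, rfl⟩ := step_char Γ hE
  refine ⟨QuotientGroup.mk (a⁻¹ * δ * a),
    ⟨QuotientGroup.mk (δ * a), ⟨δ * a, ?_, rfl⟩, ?_⟩, (dc_eq_preimage Γ _).symm⟩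
  · have : δ * a ∈ dc Γ a := (mem_dc Γ).2 ⟨δ, hδ, 1, one_mem _, by group⟩
    exact this
  · show QuotientGroup.mk (a⁻¹ * (δ * a)) = QuotientGroup.mk (a⁻¹ * δ * a)
    rw [mul_assoc]

lemma rtg_avoid {α : Type*} {s : α → α → Prop} {E b : α}
    (h : Relation.ReflTransGen s E b) :
    b = E ∨ Relation.ReflTransGen (fun x y => s x y ∧ y ≠ E) E b := by
  induction h with
  | refl => exact Or.inl rfl
  | @tail b c hab hbc ih =>
    by_cases hcE : c = E
    · exact Or.inl hcE
    · rcases ih with rfl | ih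
      · exact Or.inr (Relation.ReflTransGen.single ⟨hbc, hcE⟩)
      · exact Or.inr (ih.tail ⟨hbc, hcE⟩)

lemma exists_seq
    (hHecke : ∀ x : G,
      ((QuotientGroup.mk '' ((Γ : Set G) * {x} * (Γ : Set G))) : Set (G ⧸ Γ)).Finite)
    (g : G)
    (hinf : {E : Set G | Relation.ReflTransGen (rel Γ) (dc Γ g) E}.Infinite) :
    ∃ γs : ℕ → G, (∀ k, γs k ∈ Γ) ∧
      {E : Set G | ∃ n : ℕ, 1 ≤ n ∧ E = dc Γ (itComm g γs n)}.Infinite := by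
  classical
  set ra : Set (Set G) → Set G → Set G → Prop := fun V D E => rel Γ D E ∧ E ∉ V with hra
  let St := {p : G × Set (Set G) //
    p.2.Finite ∧ dc Γ p.1 ∈ p.2 ∧
      {E | Relation.ReflTransGen (ra p.2) (dc Γ p.1) E}.Infinite}
  have avoid_insert : ∀ (V : Set (Set G)) (E : Set G),
      {F | Relation.ReflTransGen (ra V) E F}.Infinite →
      {F | Relation.ReflTransGen (ra (insert E V)) E F}.Infinite := by
    intro V E h
    refine (h.diff (Set.finite_singleton E)).mono ?_
    rintro F ⟨hF, hne⟩
    simp only [Set.mem_singleton_iff] at hne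
    rcases rtg_avoid hF with rfl | h'
    · exact absurd rfl hne
    · refine Set.mem_setOf_eq ▸ Relation.ReflTransGen.mono ?_ _ _ h'
      rintro x y ⟨⟨hr, hyV⟩, hyE⟩
      exact ⟨hr, by simp [Set.mem_insert_iff, hyE, hyV]⟩
  have hstep : ∀ s : St, ∃ γ : G, γ ∈ Γ ∧ ∃ t : St,
      t.1.1 = pcomm s.1.1 γ ∧ t.1.2 = insert (dc Γ t.1.1) s.1.2 ∧
        dc Γ t.1.1 ∉ s.1.2 := by
    rintro ⟨⟨a, V⟩, hVfin, hmem, hinfs⟩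
    have hchild : ∃ E, ra V (dc Γ a) E ∧
        {F | Relation.ReflTransGen (ra V) E F}.Infinite := by
      by_contra hno
      push_neg at hno
      have hsub : {E | Relation.ReflTransGen (ra V) (dc Γ a) E} ⊆
          insert (dc Γ a) (⋃ E ∈ {E | ra V (dc Γ a) E},
            {F | Relation.ReflTransGen (ra V) E F}) := by
        intro b hb
        rcases Relation.ReflTransGen.cases_head hb with rfl | ⟨E, hE, hEb⟩
        · exact Set.mem_insert _ _
        · exact Set.mem_insert_of_mem _ (Set.mem_biUnion hE hEb)
      have hCfin : {E | ra V (dc Γ a) E}.Finite :=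
        (branch_finite Γ a (hHecke a)).subset (fun E hE => hE.1)
      exact hinfs (Set.Finite.subset
        ((hCfin.biUnion (fun E hE => hno E hE)).insert _) hsub)
    obtain ⟨E, ⟨hrelE, hEV⟩, hEinf⟩ := hchild
    obtain ⟨δ, hδ, rfl⟩ := step_char Γ hrelE
    have hb : dc Γ (pcomm a δ⁻¹) = dc Γ (a⁻¹ * δ * a) := by
      have hp : pcomm a δ⁻¹ = (a⁻¹ * δ * a) * δ⁻¹ := by simp [pcomm]
      rw [hp, dc_mul_right Γ (inv_mem hδ)]
    refine ⟨δ⁻¹, inv_mem hδ,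
      ⟨(pcomm a δ⁻¹, insert (dc Γ (pcomm a δ⁻¹)) V), hVfin.insert _,
        Set.mem_insert _ _, ?_⟩, rfl, rfl, ?_⟩
    · show {F | Relation.ReflTransGen (ra (insert (dc Γ (pcomm a δ⁻¹)) V))
        (dc Γ (pcomm a δ⁻¹)) F}.Infinite
      rw [hb]
      exact avoid_insert V _ hEinf
    · show dc Γ (pcomm a δ⁻¹) ∉ V
      rw [hb]; exact hEV
  have base_inf : {E | Relation.ReflTransGen (ra {dc Γ g}) (dc Γ g) E}.Infinite := by
    refine (hinf.diff (Set.finite_singleton (dc Γ g))).mono ?_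
    rintro F ⟨hF, hne⟩
    simp only [Set.mem_singleton_iff] at hne
    rcases rtg_avoid hF with rfl | h'
    · exact absurd rfl hne
    · refine Set.mem_setOf_eq ▸ Relation.ReflTransGen.mono ?_ _ _ h'
      rintro x y ⟨hr, hyE⟩
      exact ⟨hr, by simpa using hyE⟩
  let s0 : St := ⟨(g, {dc Γ g}), Set.finite_singleton _, rfl, base_inf⟩
  choose γf hγf tf htf1 htf2 htf3 using hstep
  let st : ℕ → St := fun n => Nat.rec s0 (fun _ s => tf s) n
  let γs : ℕ → G := fun n => Nat.rec (1 : G) (fun m _ => γf (st m)) n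
  have hγs : ∀ k, γs k ∈ Γ := by
    intro k
    cases k with
    | zero => exact one_mem Γ
    | succ m => exact hγf (st m)
  have hit : ∀ n, itComm g γs n = (st n).1.1 := by
    intro n
    induction n with
    | zero => rfl
    | succ m ih =>
      show pcomm (itComm g γs m) (γs (m + 1)) = (tf (st m)).1.1
      rw [ih]
      exact (htf1 (st m)).symm
  have hVmono : ∀ n, (st n).1.2 ⊆ (st (n + 1)).1.2 := by
    intro n
    show (st n).1.2 ⊆ (tf (st n)).1.2
    rw [htf2 (st n)]
    exact Set.subset_insert _ _
  have hVmono' : ∀ m n, m ≤ n → (st m).1.2 ⊆ (st n).1.2 := by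
    intro m n hmn
    induction hmn with
    | refl => exact subset_rfl
    | step _ ih => exact ih.trans (hVmono _)
  have hmemV : ∀ n, dc Γ (st n).1.1 ∈ (st n).1.2 := fun n => (st n).2.2.1
  have hnot : ∀ n, dc Γ (st (n + 1)).1.1 ∉ (st n).1.2 := fun n => htf3 (st n)
  have hneq : ∀ m n, m < n → dc Γ (st (m + 1)).1.1 ≠ dc Γ (st (n + 1)).1.1 := by
    intro m n hmn h
    apply hnot n
    rw [← h]
    exact hVmono' (m + 1) n hmn (hmemV (m + 1))
  have hinj : Function.Injective (fun n => dc Γ (st (n + 1)).1.1) := by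
    intro m n h
    rcases lt_trichotomy m n with hlt | heq | hgt
    · exact absurd h (hneq m n hlt)
    · exact heq
    · exact absurd h.symm (hneq n m hgt)
  refine ⟨γs, hγs, ?_⟩
  apply Set.infinite_of_injective_forall_mem hinj
  intro n
  exact ⟨n + 1, Nat.le_add_left 1 n, (congrArg (dc Γ) (hit (n + 1))).symm⟩

end Stmt11Aux

/-- For a Hecke pair `(G, Γ)` and `g ∈ G`, if for every sequence
`(γₖ) ⊆ Γ` the set of double cosets `{Γ[g, γ₁, …, γₙ]Γ : n ≥ 1}` is finite, then the
set of double cosets reachable from `ΓgΓ` by the successor relation is finite. -/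
theorem stmt_11 {G : Type*} [Group G] (Γ : Subgroup G)
    (hHecke : ∀ x : G,
      ((QuotientGroup.mk '' ((Γ : Set G) * {x} * (Γ : Set G))) : Set (G ⧸ Γ)).Finite)
    (g : G)
    (hfin : ∀ γs : ℕ → G, (∀ k, γs k ∈ Γ) →
      {E : Set G | ∃ n : ℕ, 1 ≤ n ∧
        E = (Γ : Set G) * {itComm g γs n} * (Γ : Set G)}.Finite) :
    {E : Set G | Relation.ReflTransGen
      (fun D E : Set G => ∃ x : G, ∃ γ ∈ Γ,
        D = (Γ : Set G) * {x} * (Γ : Set G) ∧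
        E = (Γ : Set G) * {x⁻¹ * γ * x} * (Γ : Set G))
      ((Γ : Set G) * {g} * (Γ : Set G)) E}.Finite := by
  by_contra hc
  obtain ⟨γs, hγ, hset⟩ := Stmt11Aux.exists_seq Γ hHecke g hc
  exact hset (hfin γs hγ)
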